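/- With A a self-adjoint endomorphism of an n-dimensional real inner product space and T_r its Newton transformations, tr(A² ∘ T_r) = (−1)^{r+1}(−S_1 S_{r+1} + (r + 2) S_{r+2}) for 0 ≤ r ≤ n−2. -/

import Mathlib

/-- The `r`-th elementary symmetric function of `κ₁, …, κₙ`. -/
noncomputable def esymm {n : ℕ} (r : ℕ) (κ : Fin n → ℝ) : ℝ :=
  ∑ s ∈ Finset.univ.powersetCard r, ∏ i ∈ s, κ i

/-- The Newton transformations of an endomorphism `A` with respect to scalars `S r`. -/
noncomputable def newton {V : Type*} [AddCommGroup V] [Module ℝ V]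
    (A : Module.End ℝ V) (S : ℕ → ℝ) : ℕ → Module.End ℝ V
  | 0 => 1
  | r + 1 => ((-1 : ℝ) ^ (r + 1) * S (r + 1)) • (1 : Module.End ℝ V) + A * newton A S r

/-- Elementary symmetric function over a finset. -/
noncomputable def esymmOn {n : ℕ} (κ : Fin n → ℝ) (u : Finset (Fin n)) (r : ℕ) : ℝ :=
  ∑ s ∈ u.powersetCard r, ∏ i ∈ s, κ i

lemma esymmOn_insert {n : ℕ} (κ : Fin n → ℝ) {u : Finset (Fin n)} {i : Fin n}
    (hi : i ∉ u) (r : ℕ) :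
    esymmOn κ (insert i u) (r + 1) = esymmOn κ u (r + 1) + κ i * esymmOn κ u r := by
  unfold esymmOn
  rw [Finset.powersetCard_succ_insert hi, Finset.sum_union, Finset.sum_image, Finset.mul_sum]
  · congr 1
    refine Finset.sum_congr rfl fun s hs => ?_
    rw [Finset.mem_powersetCard] at hs
    rw [Finset.prod_insert (fun h => hi (hs.1 h))]
  · intro s hs t ht hst
    rw [Finset.mem_coe, Finset.mem_powersetCard] at hs ht
    have hsi : i ∉ s := fun h => hi (hs.1 h)
    have hti : i ∉ t := fun h => hi (ht.1 h)
    rw [← Finset.erase_insert hsi, ← Finset.erase_insert hti, hst]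
  · rw [Finset.disjoint_left]
    intro s hs hs'
    rw [Finset.mem_powersetCard] at hs
    obtain ⟨t, ht, rfl⟩ := Finset.mem_image.mp hs'
    exact hi (hs.1 (Finset.mem_insert_self i t))

lemma esymmOn_erase {n : ℕ} (κ : Fin n → ℝ) {u : Finset (Fin n)} {i : Fin n}
    (hi : i ∈ u) (r : ℕ) :
    esymmOn κ u (r + 1) = esymmOn κ (u.erase i) (r + 1) + κ i * esymmOn κ (u.erase i) r := by
  conv_lhs => rw [← Finset.insert_erase hi]
  exact esymmOn_insert κ (Finset.notMem_erase i u) r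

lemma sum_mul_esymmOn_erase {n : ℕ} (κ : Fin n → ℝ) (u : Finset (Fin n)) (r : ℕ) :
    ∑ i ∈ u, κ i * esymmOn κ (u.erase i) r = (r + 1 : ℝ) * esymmOn κ u (r + 1) := by
  unfold esymmOn
  have step1 : ∀ i ∈ u, κ i * ∑ s ∈ (u.erase i).powersetCard r, ∏ j ∈ s, κ j
      = ∑ t ∈ (u.powersetCard (r + 1)).filter (fun t => i ∈ t), ∏ j ∈ t, κ j := by
    intro i hi
    rw [Finset.mul_sum]
    refine Finset.sum_bij (fun s _ => insert i s) ?_ ?_ ?_ ?_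
    · intro s hs
      rw [Finset.mem_powersetCard] at hs
      rw [Finset.mem_filter, Finset.mem_powersetCard]
      refine ⟨⟨?_, ?_⟩, Finset.mem_insert_self i s⟩
      · exact Finset.insert_subset hi (hs.1.trans (Finset.erase_subset _ _))
      · rw [Finset.card_insert_of_notMem (fun h => Finset.notMem_erase i u (hs.1 h)), hs.2]
    · intro s hs t ht hst
      rw [Finset.mem_powersetCard] at hs ht
      have hsi : i ∉ s := fun h => Finset.notMem_erase i u (hs.1 h)
      have hti : i ∉ t := fun h => Finset.notMem_erase i u (ht.1 h)
      rw [← Finset.erase_insert hsi, ← Finset.erase_insert hti]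
      exact congrArg (fun x => x.erase i) hst
    · intro t ht
      rw [Finset.mem_filter, Finset.mem_powersetCard] at ht
      refine ⟨t.erase i, ?_, ?_⟩
      · rw [Finset.mem_powersetCard]
        refine ⟨Finset.erase_subset_erase i ht.1.1, ?_⟩
        rw [Finset.card_erase_of_mem ht.2, ht.1.2]
        omega
      · exact Finset.insert_erase ht.2
    · intro s hs
      rw [Finset.mem_powersetCard] at hs
      rw [Finset.prod_insert (fun h => Finset.notMem_erase i u (hs.1 h))]
  rw [Finset.sum_congr rfl step1]
  rw [Finset.sum_comm' (s := u) (t := fun i => (u.powersetCard (r + 1)).filter (fun t => i ∈ t))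
    (t' := u.powersetCard (r + 1)) (s' := fun t => t)
    (fun i t => by
      simp only [Finset.mem_filter]
      constructor
      · rintro ⟨_, ht, hit⟩; exact ⟨hit, ht⟩
      · rintro ⟨hit, ht⟩
        exact ⟨(Finset.mem_powersetCard.mp ht).1 hit, ht, hit⟩)]
  rw [Finset.mul_sum]
  refine Finset.sum_congr rfl fun t ht => ?_
  rw [Finset.sum_const, Finset.mem_powersetCard.mp ht |>.2]
  push_cast
  ring

/-- `tr(A² ∘ T_r) = (-1)^{r+1} (-S_1 S_{r+1} + (r + 2) S_{r+2})` for `0 ≤ r ≤ n - 2`. -/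
theorem trace_sq_comp_newton {V : Type*} [NormedAddCommGroup V] [InnerProductSpace ℝ V]
    [FiniteDimensional ℝ V] {n : ℕ} (hn : Module.finrank ℝ V = n)
    {A : V →ₗ[ℝ] V} (hA : A.IsSymmetric) (r : ℕ) (hr : r + 2 ≤ n) :
    LinearMap.trace ℝ V
        ((A : Module.End ℝ V) ^ 2 * newton A (fun k => esymm k (hA.eigenvalues hn)) r) =
      (-1 : ℝ) ^ (r + 1) *
        (-(esymm 1 (hA.eigenvalues hn)) * esymm (r + 1) (hA.eigenvalues hn) +
          ((r : ℝ) + 2) * esymm (r + 2) (hA.eigenvalues hn)) := by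
  set κ := hA.eigenvalues hn with hκ
  set b := hA.eigenvectorBasis hn with hb
  have hAb : ∀ i, A (b i) = κ i • b i := fun i => by
    rw [hb, hκ]; simpa using hA.apply_eigenvectorBasis hn i
  have hesymm : ∀ k, esymm k κ = esymmOn κ Finset.univ k := fun k => rfl
  -- newton eigenvalues
  have hN : ∀ (s : ℕ) (i : Fin n),
      (newton A (fun k => esymm k κ) s) (b i)
        = ((-1 : ℝ) ^ s * esymmOn κ (Finset.univ.erase i) s) • b i := by
    intro s i
    induction s with
    | zero =>
      simp [newton, esymmOn]
    | succ s ih =>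
      show (((-1 : ℝ) ^ (s + 1) * esymm (s + 1) κ) • (1 : Module.End ℝ V)
          + A * newton A (fun k => esymm k κ) s) (b i) = _
      rw [LinearMap.add_apply, LinearMap.smul_apply, Module.End.one_apply,
        Module.End.mul_apply, ih, map_smul, hAb, smul_smul, ← add_smul]
      congr 1
      rw [hesymm, esymmOn_erase κ (Finset.mem_univ i) s]
      ring
  -- the map is diagonal in basis b with entries c i
  set c : Fin n → ℝ := fun i => κ i ^ 2 * ((-1 : ℝ) ^ r * esymmOn κ (Finset.univ.erase i) r)
    with hc
  have hM : ∀ i, ((A : Module.End ℝ V) ^ 2 * newton A (fun k => esymm k κ) r) (b i)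
      = c i • b i := by
    intro i
    rw [Module.End.mul_apply, hN, map_smul, pow_two, Module.End.mul_apply, hAb, map_smul, hAb]
    rw [smul_smul, smul_smul, hc]
    ring_nf
  -- trace
  have htr : LinearMap.trace ℝ V
      ((A : Module.End ℝ V) ^ 2 * newton A (fun k => esymm k κ) r) = ∑ i, c i := by
    rw [LinearMap.trace_eq_matrix_trace ℝ b.toBasis, Matrix.trace]
    refine Finset.sum_congr rfl fun i _ => ?_
    rw [Matrix.diag_apply, LinearMap.toMatrix_apply]
    simp [hM i]
  rw [htr]
  -- symmetric function identity
  have key : ∀ i : Fin n, κ i ^ 2 * esymmOn κ (Finset.univ.erase i) r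
      = κ i * esymmOn κ Finset.univ (r + 1) - κ i * esymmOn κ (Finset.univ.erase i) (r + 1) := by
    intro i
    rw [esymmOn_erase κ (Finset.mem_univ i) r]
    ring
  have sum1 : ∑ i, κ i = esymm 1 κ := by
    rw [hesymm, esymmOn, Finset.powersetCard_one, Finset.sum_map]
    simp
  calc ∑ i, c i = ((-1:ℝ)^r) * ∑ i : Fin n, κ i ^ 2 * esymmOn κ (Finset.univ.erase i) r := by
        rw [Finset.mul_sum]; exact Finset.sum_congr rfl fun i _ => by rw [hc]; ring
    _ = ((-1:ℝ)^r) * ((∑ i, κ i) * esymmOn κ Finset.univ (r + 1)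
        - ∑ i, κ i * esymmOn κ (Finset.univ.erase i) (r + 1)) := by
        rw [Finset.sum_congr rfl fun i _ => key i, Finset.sum_sub_distrib, ← Finset.sum_mul]
    _ = _ := by
        rw [sum_mul_esymmOn_erase κ Finset.univ (r + 1), sum1, hesymm (r+1), hesymm (r+2)]
        push_cast
        ring
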